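/- Let 0 < q < 1, λ > 0, and a > 0, and suppose G : [-λ/2, λ/2] → [0,1] is C¹ and non-increasing with -G'(t) ≤ a·(λ/2 - |t|)^{q-1} for |t| < λ/2. Then there is a constant α > 0 (depending on q, λ, a) such that for all z with -λ/2 < z < λ/2: -∫_{-z}^{λ/2} q·(z+t)^{q-1}·G'(t) dt ≤ α·max((z + λ/2)^{2q-1}, (λ/2 - z)^{q-1}). -/

import Mathlib

open intervalIntegral

theorem stmt_17 (q lam a : ℝ) (hq0 : 0 < q) (hq1 : q < 1) (hlam : 0 < lam) (ha : 0 < a)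
    (G : ℝ → ℝ)
    (hG : ContDiffOn ℝ 1 G (Set.Icc (-lam/2) (lam/2)))
    (hGanti : AntitoneOn G (Set.Icc (-lam/2) (lam/2)))
    (hGval : ∀ t ∈ Set.Icc (-lam/2) (lam/2), G t ∈ Set.Icc (0:ℝ) 1)
    (hG' : ∀ t : ℝ, |t| < lam/2 → -(deriv G t) ≤ a * (lam/2 - |t|) ^ (q-1)) :
    ∃ α > (0:ℝ), ∀ z : ℝ, -lam/2 < z → z < lam/2 →
      -(∫ t in (-z)..(lam/2), q * (z + t) ^ (q-1) * deriv G t)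
        ≤ α * max ((z + lam/2) ^ (2*q - 1)) ((lam/2 - z) ^ (q-1)) := by
  have hq1' : q - 1 ≤ 0 := by linarith
  have hq1'' : (-1:ℝ) < q - 1 := by linarith
  refine ⟨a * ((lam/2)^q + (2:ℝ)^(2-2*q)) + 1, by positivity, ?_⟩
  intro z hz1 hz2
  set M := max ((z + lam/2) ^ (2*q - 1)) ((lam/2 - z) ^ (q-1)) with hM
  have hL0 : 0 < z + lam/2 := by linarith
  have hM0 : 0 ≤ M := le_trans (Real.rpow_nonneg hL0.le _) (le_max_left _ _)
  set m : ℝ := (lam/2 - z)/2 with hm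
  have hm0 : 0 < m := by rw [hm]; linarith
  have hzm : -z < m := by rw [hm]; linarith
  have hmlam : m < lam/2 := by rw [hm]; linarith
  have hzmhalf : z + m = (z + lam/2)/2 := by rw [hm]; ring
  have hlamm : lam/2 - m = (z + lam/2)/2 := by rw [hm]; ring
  set L2 : ℝ := (z + lam/2)/2 with hL2
  have hL20 : 0 < L2 := by rw [hL2]; linarith
  set F : ℝ → ℝ := fun t => q * (z + t) ^ (q-1) * -deriv G t with hF
  have hneg : -(∫ t in (-z)..(lam/2), q * (z + t) ^ (q-1) * deriv G t)
      = ∫ t in (-z)..(lam/2), F t := by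
    rw [← intervalIntegral.integral_neg]
    congr 1
    funext t
    rw [hF]
    ring
  rw [hneg]
  by_cases hFi : IntervalIntegrable F MeasureTheory.volume (-z) (lam/2)
  · -- main case
    have hFi1 : IntervalIntegrable F MeasureTheory.volume (-z) m := by
      refine hFi.mono_set ?_
      rw [Set.uIcc_of_le hzm.le, Set.uIcc_of_le (by linarith : -z ≤ lam/2)]
      exact Set.Icc_subset_Icc le_rfl hmlam.le
    have hFi2 : IntervalIntegrable F MeasureTheory.volume m (lam/2) := by
      refine hFi.mono_set ?_
      rw [Set.uIcc_of_le hmlam.le, Set.uIcc_of_le (by linarith : -z ≤ lam/2)]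
      exact Set.Icc_subset_Icc hzm.le le_rfl
    rw [← intervalIntegral.integral_add_adjacent_intervals hFi1 hFi2]
    -- the constants
    set C1 : ℝ := q * (a * ((lam/2 - z) ^ (q-1) + L2 ^ (q-1))) with hC1
    set C2 : ℝ := q * (L2 ^ (q-1) * a) with hC2
    -- integrability of the dominating functions
    have hint1 : IntervalIntegrable (fun t => (z + t) ^ (q-1)) MeasureTheory.volume (-z) m := by
      have h := (intervalIntegrable_rpow' (r := q-1) hq1'' (a := 0) (b := L2)).comp_add_left z
      rw [show (0:ℝ) - z = -z by ring, show L2 - z = m by rw [hL2, hm]; ring] at h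
      exact h
    have hint2 : IntervalIntegrable (fun t => (lam/2 - t) ^ (q-1))
        MeasureTheory.volume m (lam/2) := by
      have h := (intervalIntegrable_rpow' (r := q-1) hq1'' (a := 0) (b := L2)).comp_sub_left (lam/2)
      rw [show lam/2 - 0 = lam/2 by ring, show lam/2 - L2 = m by rw [hL2, hm]; ring] at h
      exact h.symm
    have hint1' : IntervalIntegrable (fun t => C1 * (z + t) ^ (q-1))
        MeasureTheory.volume (-z) m := hint1.const_mul C1
    have hint2' : IntervalIntegrable (fun t => C2 * (lam/2 - t) ^ (q-1))
        MeasureTheory.volume m (lam/2) := hint2.const_mul C2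
    -- bound on first interval
    have hb1 : (∫ t in (-z)..m, F t) ≤ ∫ t in (-z)..m, C1 * (z + t) ^ (q-1) := by
      refine intervalIntegral.integral_mono_on hzm.le hFi1 hint1' ?_
      intro t ht
      obtain ⟨ht1, ht2⟩ := ht
      have hp : (0:ℝ) ≤ (z + t) ^ (q-1) := Real.rpow_nonneg (by linarith) _
      have habs : |t| < lam/2 := abs_lt.mpr ⟨by linarith, by linarith⟩
      have hd := hG' t habs
      have hmin : (lam/2 - |t|) ^ (q-1) ≤ (lam/2 - z) ^ (q-1) + L2 ^ (q-1) := by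
        rcases le_or_gt 0 t with h0 | h0
        · rw [abs_of_nonneg h0]
          have : L2 ^ (q-1) ≥ (lam/2 - t) ^ (q-1) := by
            refine Real.rpow_le_rpow_of_nonpos hL20 ?_ hq1'
            rw [hL2]; rw [hm] at ht2; linarith
          have h2 : (0:ℝ) ≤ (lam/2 - z) ^ (q-1) := Real.rpow_nonneg (by linarith) _
          linarith
        · rw [abs_of_neg h0]
          have : (lam/2 - z) ^ (q-1) ≥ (lam/2 - -t) ^ (q-1) := by
            refine Real.rpow_le_rpow_of_nonpos (by linarith) (by linarith) hq1'
          have h2 : (0:ℝ) ≤ L2 ^ (q-1) := Real.rpow_nonneg hL20.le _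
          linarith
      calc F t = q * (z + t) ^ (q-1) * -deriv G t := rfl
        _ ≤ q * (z + t) ^ (q-1) * (a * (lam/2 - |t|) ^ (q-1)) := by
            refine mul_le_mul_of_nonneg_left hd ?_
            positivity
        _ ≤ q * (z + t) ^ (q-1) * (a * ((lam/2 - z) ^ (q-1) + L2 ^ (q-1))) := by
            refine mul_le_mul_of_nonneg_left (mul_le_mul_of_nonneg_left hmin ha.le) ?_
            positivity
        _ = C1 * (z + t) ^ (q-1) := by rw [hC1]; ring
    -- bound on second interval
    have hb2 : (∫ t in m..(lam/2), F t) ≤ ∫ t in m..(lam/2), C2 * (lam/2 - t) ^ (q-1) := by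
      refine intervalIntegral.integral_mono_ae_restrict hmlam.le hFi2 hint2' ?_
      have hne : ∀ᵐ t ∂(MeasureTheory.volume.restrict (Set.Icc m (lam/2))), t ≠ lam/2 := by
        refine MeasureTheory.ae_iff.mpr ?_
        have hs : {t : ℝ | ¬ t ≠ lam/2} = {lam/2} := by ext x; simp
        rw [hs, MeasureTheory.Measure.restrict_apply (measurableSet_singleton _)]
        exact MeasureTheory.measure_mono_null Set.inter_subset_left Real.volume_singleton
      filter_upwards [hne, MeasureTheory.ae_restrict_mem measurableSet_Icc] with t htne ht
      obtain ⟨ht1, ht2⟩ := ht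
      have ht2' : t < lam/2 := lt_of_le_of_ne ht2 htne
      have ht0 : 0 < t := lt_of_lt_of_le hm0 ht1
      have habs : |t| < lam/2 := abs_lt.mpr ⟨by linarith, ht2'⟩
      have hd := hG' t habs
      rw [abs_of_nonneg ht0.le] at hd
      have hX : (0:ℝ) ≤ a * (lam/2 - t) ^ (q-1) := by
        have := Real.rpow_nonneg (by linarith : (0:ℝ) ≤ lam/2 - t) (q-1)
        positivity
      have hpp : (z + t) ^ (q-1) ≤ L2 ^ (q-1) := by
        refine Real.rpow_le_rpow_of_nonpos hL20 ?_ hq1'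
        rw [hL2]; rw [hm] at ht1; linarith
      calc F t = q * (z + t) ^ (q-1) * -deriv G t := rfl
        _ ≤ q * (z + t) ^ (q-1) * (a * (lam/2 - t) ^ (q-1)) := by
            refine mul_le_mul_of_nonneg_left hd ?_
            have := Real.rpow_nonneg (by linarith : (0:ℝ) ≤ z + t) (q-1)
            positivity
        _ ≤ q * L2 ^ (q-1) * (a * (lam/2 - t) ^ (q-1)) := by
            refine mul_le_mul_of_nonneg_right (mul_le_mul_of_nonneg_left hpp hq0.le) hX
        _ = C2 * (lam/2 - t) ^ (q-1) := by rw [hC2]; ring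
    -- compute the two dominating integrals
    have hq0' : q ≠ 0 := ne_of_gt hq0
    have hI1 : (∫ t in (-z)..m, C1 * (z + t) ^ (q-1)) = C1 * (L2 ^ q / q) := by
      rw [intervalIntegral.integral_const_mul]
      congr 1
      have h := intervalIntegral.integral_comp_add_left (a := -z) (b := m)
        (fun s : ℝ => s ^ (q-1)) z
      rw [show z + -z = 0 by ring, show z + m = L2 by rw [hL2, hm]; ring] at h
      rw [h, integral_rpow (Or.inl hq1'')]
      rw [show q - 1 + 1 = q by ring, Real.zero_rpow hq0']
      ring
    have hI2 : (∫ t in m..(lam/2), C2 * (lam/2 - t) ^ (q-1)) = C2 * (L2 ^ q / q) := by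
      rw [intervalIntegral.integral_const_mul]
      congr 1
      have h := intervalIntegral.integral_comp_sub_left (a := m) (b := lam/2)
        (fun s : ℝ => s ^ (q-1)) (lam/2)
      rw [show lam/2 - lam/2 = 0 by ring, show lam/2 - m = L2 by rw [hL2, hm]; ring] at h
      rw [h, integral_rpow (Or.inl hq1'')]
      rw [show q - 1 + 1 = q by ring, Real.zero_rpow hq0']
      ring
    rw [hI1] at hb1
    rw [hI2] at hb2
    -- combine
    have key : C1 * (L2 ^ q / q) + C2 * (L2 ^ q / q)
        ≤ (a * ((lam/2)^q + (2:ℝ)^(2-2*q))) * M := by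
      have hexp : L2 ^ (q-1) * L2 ^ q = L2 ^ (2*q - 1) := by
        rw [← Real.rpow_add hL20, show q - 1 + q = 2*q - 1 by ring]
      have hC1v : C1 * (L2 ^ q / q) = a * (lam/2 - z) ^ (q-1) * L2 ^ q + a * L2 ^ (2*q-1) := by
        rw [hC1]
        field_simp
        rw [show q * 2 - 1 = 2*q - 1 by ring, ← hexp]
        ring
      have hC2v : C2 * (L2 ^ q / q) = a * L2 ^ (2*q-1) := by
        rw [hC2]
        field_simp
        rw [mul_comm, show q * 2 - 1 = 2*q - 1 by ring, ← hexp]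
        ring
      rw [hC1v, hC2v]
      -- L2 ^ q ≤ (lam/2) ^ q
      have hLq : L2 ^ q ≤ (lam/2) ^ q := by
        refine Real.rpow_le_rpow hL20.le ?_ hq0.le
        rw [hL2]; linarith
      -- 2 * L2 ^ (2q-1) = 2^(2-2q) * (z+lam/2)^(2q-1)
      have hL2v : L2 ^ (2*q-1) = (2:ℝ)^(1-2*q) * (z + lam/2) ^ (2*q-1) := by
        rw [hL2, div_eq_mul_inv, Real.mul_rpow hL0.le (by norm_num),
          show ((2:ℝ)⁻¹) = (2:ℝ)^(-1:ℝ) by norm_num [Real.rpow_neg_one],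
          ← Real.rpow_mul (by norm_num : (0:ℝ) ≤ 2)]
        rw [show (-1:ℝ) * (2*q-1) = 1 - 2*q by ring]
        ring
      have h2 : (2:ℝ) * ((2:ℝ)^(1-2*q)) = (2:ℝ)^(2-2*q) := by
        rw [show (2:ℝ)-2*q = 1 + (1-2*q) by ring, Real.rpow_add (by norm_num : (0:ℝ) < 2),
          Real.rpow_one]
      have hmax1 : (z + lam/2) ^ (2*q-1) ≤ M := le_max_left _ _
      have hmax2 : (lam/2 - z) ^ (q-1) ≤ M := le_max_right _ _
      have hnn1 : (0:ℝ) ≤ (lam/2 - z) ^ (q-1) := Real.rpow_nonneg (by linarith) _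
      have hnn2 : (0:ℝ) ≤ (z + lam/2) ^ (2*q-1) := Real.rpow_nonneg hL0.le _
      have hnn3 : (0:ℝ) ≤ (2:ℝ)^(1-2*q) := Real.rpow_nonneg (by norm_num) _
      have hnn4 : (0:ℝ) ≤ (lam/2)^q := Real.rpow_nonneg (by linarith) _
      calc a * (lam/2 - z) ^ (q-1) * L2 ^ q + a * L2 ^ (2*q-1) + a * L2 ^ (2*q-1)
          = a * (lam/2 - z) ^ (q-1) * L2 ^ q
            + a * ((2:ℝ) * ((2:ℝ)^(1-2*q))) * (z + lam/2) ^ (2*q-1) := by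
            rw [hL2v]; ring
        _ ≤ a * (lam/2 - z) ^ (q-1) * (lam/2)^q
            + a * ((2:ℝ)^(2-2*q)) * (z + lam/2) ^ (2*q-1) := by
            rw [h2]
            refine add_le_add ?_ le_rfl
            refine mul_le_mul_of_nonneg_left hLq ?_
            positivity
        _ ≤ a * (lam/2)^q * M + a * ((2:ℝ)^(2-2*q)) * M := by
            refine add_le_add ?_ ?_
            · rw [show a * (lam/2 - z) ^ (q-1) * (lam/2)^q
                = (a * (lam/2)^q) * (lam/2 - z) ^ (q-1) by ring]
              refine mul_le_mul_of_nonneg_left hmax2 (by positivity)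
            · refine mul_le_mul_of_nonneg_left hmax1 ?_
              have : (0:ℝ) ≤ (2:ℝ)^(2-2*q) := Real.rpow_nonneg (by norm_num) _
              positivity
        _ = (a * ((lam/2)^q + (2:ℝ)^(2-2*q))) * M := by ring
    have hfinal : (a * ((lam/2)^q + (2:ℝ)^(2-2*q))) * M
        ≤ (a * ((lam/2)^q + (2:ℝ)^(2-2*q)) + 1) * M := by
      nlinarith [hM0]
    linarith [add_le_add hb1 hb2]
  · rw [intervalIntegral.integral_undef hFi]
    positivity
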